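/- For every α, β in F, the 8-dimensional algebra S_{α,β}-bar is conservative, with associated multiplication F given on basis vectors by F(e_1,e_1)=-e_1, F(e_1,e_2)=-e_2, F(e_1,e_5)=-2e_1, F(e_2,e_1)=(1-α)e_2, F(e_2,e_5)=(-1-β)e_2, F(e_5,e_1)=-2e_1, F(e_5,e_2)=-2e_2, F(e_5,e_5)=-4e_1, all other values zero: the identity b(a(xy)-(ax)y-x(ay)) - a((bx)y) + (a(bx))y + (bx)(ay) - a(x(by)) + (ax)(by) + x(a(by)) = -F(a,b)(xy) + (F(a,b)x)y + x(F(a,b)y) holds for all a,b,x,y. -/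
import Mathlib


def tbl (F : Type*) [Field F] (a b : F) : Fin 8 → Fin 8 → Fin 8 → F :=
  ![![![-1, 0, 0, 0, 0, 0, 0, 0], ![0, (-3+a), 0, 0, 0, 0, 0, 0], ![0, 0, (1-a), 0, 0, 0, 0, 0], ![0, 0, 0, (3-2*a), 0, 0, 0, 0], ![0, 0, 0, 0, -1, 0, 0, 0], ![0, 0, 0, 0, 0, (1-a), 0, 0], ![0, 0, 0, 0, 0, 0, (1-a), 0], ![0, 0, 0, 0, 0, 0, 0, -1]],
    ![![0, 3, 0, 0, 0, 0, 0, 0], ![0, 0, 0, 0, 0, 0, 0, 0], ![0, 0, 0, 0, 0, 0, 0, 0], ![0, 0, 0, 0, 0, 0, 0, 0], ![0, 0, 0, 0, 0, 0, 0, 0], ![0, 0, 0, 0, 0, 0, 0, 0], ![0, 0, 0, 0, 0, 0, 0, 0], ![0, 0, 0, 0, 0, 0, 0, 0]],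
    ![![0, 0, -2, 0, 0, 0, -a, 0], ![0, 0, 0, 0, 0, 0, 0, 0], ![0, 0, 0, -3, 0, 0, 0, 0], ![0, 0, 0, 0, 0, 0, 0, 0], ![0, 0, 0, 0, 0, 1, -b, 0], ![0, 0, 0, 0, 0, 0, 0, 0], ![0, 0, 0, 0, 0, 0, 0, 0], ![0, 0, 0, 0, 0, 0, 0, 0]],
    ![![0, 0, 0, 0, 0, 0, 0, 0], ![0, 0, 0, 0, 0, 0, 0, 0], ![0, 0, 0, 0, 0, 0, 0, 0], ![0, 0, 0, 0, 0, 0, 0, 0], ![0, 0, 0, 0, 0, 0, 0, 0], ![0, 0, 0, 0, 0, 0, 0, 0], ![0, 0, 0, 0, 0, 0, 0, 0], ![0, 0, 0, 0, 0, 0, 0, 0]],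
    ![![-2, 0, 0, 0, 0, 0, 0, 0], ![0, (-3+b), 0, 0, 0, 0, 0, 0], ![0, 0, (-1-b), 0, 0, 0, 0, 0], ![0, 0, 0, (-2*b), 0, 0, 0, 0], ![0, 0, 0, 0, -2, 0, 0, 0], ![0, 0, 0, 0, 0, (-1-b), 0, 0], ![0, 0, 0, 0, 0, 0, (-1-b), 0], ![0, 0, 0, 0, 0, 0, 0, -2]],
    ![![0, 0, 2, 0, 0, 0, a, 0], ![0, 0, 0, 0, 0, 0, 0, 0], ![0, 0, 0, 3, 0, 0, 0, 0], ![0, 0, 0, 0, 0, 0, 0, 0], ![0, 0, 0, 0, 0, -1, b, 0], ![0, 0, 0, 0, 0, 0, 0, 0], ![0, 0, 0, 0, 0, 0, 0, 0], ![0, 0, 0, 0, 0, 0, 0, 0]],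
    ![![0, 0, 2, 0, 0, 0, a, 0], ![0, 0, 0, 0, 0, 0, 0, 0], ![0, 0, 0, 3, 0, 0, 0, 0], ![0, 0, 0, 0, 0, 0, 0, 0], ![0, 0, 0, 0, 0, -1, b, 0], ![0, 0, 0, 0, 0, 0, 0, 0], ![0, 0, 0, 0, 0, 0, 0, 0], ![0, 0, 0, 0, 0, 0, 0, 0]],
    ![![0, 0, 0, 0, 0, 0, 0, 0], ![0, 0, 0, 0, 0, 0, 0, 0], ![0, 0, 0, 0, 0, 0, 0, 0], ![0, 0, 0, 0, 0, 0, 0, 0], ![0, 0, 0, 0, 0, 0, 0, 0], ![0, 0, 0, 0, 0, 0, 0, 0], ![0, 0, 0, 0, 0, 0, 0, 0], ![0, 0, 0, 0, 0, 0, 0, 0]]]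

def mul (F : Type*) [Field F] (a b : F) (x y : Fin 8 → F) : Fin 8 → F :=
  fun k => ∑ i, ∑ j, x i * y j * tbl F a b i j k

def ftbl (F : Type*) [Field F] (a b : F) : Fin 8 → Fin 8 → Fin 8 → F :=
  ![![![-1, 0, 0, 0, 0, 0, 0, 0], ![0, -1, 0, 0, 0, 0, 0, 0], ![0, 0, 0, 0, 0, 0, 0, 0], ![0, 0, 0, 0, 0, 0, 0, 0], ![-2, 0, 0, 0, 0, 0, 0, 0], ![0, 0, 0, 0, 0, 0, 0, 0], ![0, 0, 0, 0, 0, 0, 0, 0], ![0, 0, 0, 0, 0, 0, 0, 0]],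
    ![![0, (1-a), 0, 0, 0, 0, 0, 0], ![0, 0, 0, 0, 0, 0, 0, 0], ![0, 0, 0, 0, 0, 0, 0, 0], ![0, 0, 0, 0, 0, 0, 0, 0], ![0, (-1-b), 0, 0, 0, 0, 0, 0], ![0, 0, 0, 0, 0, 0, 0, 0], ![0, 0, 0, 0, 0, 0, 0, 0], ![0, 0, 0, 0, 0, 0, 0, 0]],
    ![![0, 0, 0, 0, 0, 0, 0, 0], ![0, 0, 0, 0, 0, 0, 0, 0], ![0, 0, 0, 0, 0, 0, 0, 0], ![0, 0, 0, 0, 0, 0, 0, 0], ![0, 0, 0, 0, 0, 0, 0, 0], ![0, 0, 0, 0, 0, 0, 0, 0], ![0, 0, 0, 0, 0, 0, 0, 0], ![0, 0, 0, 0, 0, 0, 0, 0]],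
    ![![0, 0, 0, 0, 0, 0, 0, 0], ![0, 0, 0, 0, 0, 0, 0, 0], ![0, 0, 0, 0, 0, 0, 0, 0], ![0, 0, 0, 0, 0, 0, 0, 0], ![0, 0, 0, 0, 0, 0, 0, 0], ![0, 0, 0, 0, 0, 0, 0, 0], ![0, 0, 0, 0, 0, 0, 0, 0], ![0, 0, 0, 0, 0, 0, 0, 0]],
    ![![-2, 0, 0, 0, 0, 0, 0, 0], ![0, -2, 0, 0, 0, 0, 0, 0], ![0, 0, 0, 0, 0, 0, 0, 0], ![0, 0, 0, 0, 0, 0, 0, 0], ![-4, 0, 0, 0, 0, 0, 0, 0], ![0, 0, 0, 0, 0, 0, 0, 0], ![0, 0, 0, 0, 0, 0, 0, 0], ![0, 0, 0, 0, 0, 0, 0, 0]],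
    ![![0, 0, 0, 0, 0, 0, 0, 0], ![0, 0, 0, 0, 0, 0, 0, 0], ![0, 0, 0, 0, 0, 0, 0, 0], ![0, 0, 0, 0, 0, 0, 0, 0], ![0, 0, 0, 0, 0, 0, 0, 0], ![0, 0, 0, 0, 0, 0, 0, 0], ![0, 0, 0, 0, 0, 0, 0, 0], ![0, 0, 0, 0, 0, 0, 0, 0]],
    ![![0, 0, 0, 0, 0, 0, 0, 0], ![0, 0, 0, 0, 0, 0, 0, 0], ![0, 0, 0, 0, 0, 0, 0, 0], ![0, 0, 0, 0, 0, 0, 0, 0], ![0, 0, 0, 0, 0, 0, 0, 0], ![0, 0, 0, 0, 0, 0, 0, 0], ![0, 0, 0, 0, 0, 0, 0, 0], ![0, 0, 0, 0, 0, 0, 0, 0]],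
    ![![0, 0, 0, 0, 0, 0, 0, 0], ![0, 0, 0, 0, 0, 0, 0, 0], ![0, 0, 0, 0, 0, 0, 0, 0], ![0, 0, 0, 0, 0, 0, 0, 0], ![0, 0, 0, 0, 0, 0, 0, 0], ![0, 0, 0, 0, 0, 0, 0, 0], ![0, 0, 0, 0, 0, 0, 0, 0], ![0, 0, 0, 0, 0, 0, 0, 0]]]

def fmul (F : Type*) [Field F] (a b : F) (x y : Fin 8 → F) : Fin 8 → F :=
  fun k => ∑ i, ∑ j, x i * y j * ftbl F a b i j k

section VecEval
variable {γ : Type*} (a0 a1 a2 a3 a4 a5 a6 a7 : γ)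
lemma cv0 : ![a0,a1,a2,a3,a4,a5,a6,a7] 0 = a0 := rfl
lemma cv1 : ![a0,a1,a2,a3,a4,a5,a6,a7] 1 = a1 := rfl
lemma cv2 : ![a0,a1,a2,a3,a4,a5,a6,a7] 2 = a2 := rfl
lemma cv3 : ![a0,a1,a2,a3,a4,a5,a6,a7] 3 = a3 := rfl
lemma cv4 : ![a0,a1,a2,a3,a4,a5,a6,a7] 4 = a4 := rfl
lemma cv5 : ![a0,a1,a2,a3,a4,a5,a6,a7] 5 = a5 := rfl
lemma cv6 : ![a0,a1,a2,a3,a4,a5,a6,a7] 6 = a6 := rfl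
lemma cv7 : ![a0,a1,a2,a3,a4,a5,a6,a7] 7 = a7 := rfl
lemma cw0 (h : 0 < 8) : ![a0,a1,a2,a3,a4,a5,a6,a7] ⟨0,h⟩ = a0 := rfl
lemma cw1 (h : 1 < 8) : ![a0,a1,a2,a3,a4,a5,a6,a7] ⟨1,h⟩ = a1 := rfl
lemma cw2 (h : 2 < 8) : ![a0,a1,a2,a3,a4,a5,a6,a7] ⟨2,h⟩ = a2 := rfl
lemma cw3 (h : 3 < 8) : ![a0,a1,a2,a3,a4,a5,a6,a7] ⟨3,h⟩ = a3 := rfl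
lemma cw4 (h : 4 < 8) : ![a0,a1,a2,a3,a4,a5,a6,a7] ⟨4,h⟩ = a4 := rfl
lemma cw5 (h : 5 < 8) : ![a0,a1,a2,a3,a4,a5,a6,a7] ⟨5,h⟩ = a5 := rfl
lemma cw6 (h : 6 < 8) : ![a0,a1,a2,a3,a4,a5,a6,a7] ⟨6,h⟩ = a6 := rfl
lemma cw7 (h : 7 < 8) : ![a0,a1,a2,a3,a4,a5,a6,a7] ⟨7,h⟩ = a7 := rfl
end VecEval

set_option maxHeartbeats 1000000 in
lemma mul_eq (F : Type*) [Field F] (a b : F) (x y : Fin 8 → F) :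
    mul F a b x y = ![
      -(x 0 * y 0) - 2 * (x 4 * y 0),
      (-3+a) * (x 0 * y 1) + 3 * (x 1 * y 0) + (-3+b) * (x 4 * y 1),
      (1-a) * (x 0 * y 2) - 2 * (x 2 * y 0) + (-1-b) * (x 4 * y 2) + 2 * (x 5 * y 0) + 2 * (x 6 * y 0),
      (3-2*a) * (x 0 * y 3) - 3 * (x 2 * y 2) - 2*b * (x 4 * y 3) + 3 * (x 5 * y 2) + 3 * (x 6 * y 2),
      -(x 0 * y 4) - 2 * (x 4 * y 4),
      (1-a) * (x 0 * y 5) + x 2 * y 4 + (-1-b) * (x 4 * y 5) - x 5 * y 4 - x 6 * y 4,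
      (1-a) * (x 0 * y 6) - a * (x 2 * y 0) - b * (x 2 * y 4) + (-1-b) * (x 4 * y 6)
        + a * (x 5 * y 0) + b * (x 5 * y 4) + a * (x 6 * y 0) + b * (x 6 * y 4),
      -(x 0 * y 7) - 2 * (x 4 * y 7)] := by
  funext k
  fin_cases k <;>
    simp only [mul, tbl, Fin.sum_univ_eight, cv0, cv1, cv2, cv3, cv4, cv5, cv6, cv7, cw0, cw1, cw2, cw3, cw4, cw5, cw6, cw7,
      mul_zero, zero_mul, add_zero, zero_add, mul_one, mul_neg] <;> ring

set_option maxHeartbeats 1000000 in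
lemma fmul_eq (F : Type*) [Field F] (a b : F) (x y : Fin 8 → F) :
    fmul F a b x y = ![
      -(x 0 * y 0) - 2 * (x 0 * y 4) - 2 * (x 4 * y 0) - 4 * (x 4 * y 4),
      -(x 0 * y 1) + (1-a) * (x 1 * y 0) + (-1-b) * (x 1 * y 4) - 2 * (x 4 * y 1),
      0, 0, 0, 0, 0, 0] := by
  funext k
  fin_cases k <;>
    simp only [fmul, ftbl, Fin.sum_univ_eight, cv0, cv1, cv2, cv3, cv4, cv5, cv6, cv7,
      cw0, cw1, cw2, cw3, cw4, cw5, cw6, cw7,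
      mul_zero, zero_mul, add_zero, zero_add, mul_one, mul_neg] <;> ring

set_option maxHeartbeats 4000000 in
/-- For all `α β`, the algebra `S₍α,β₎`-bar is conservative with the given associated
multiplication. -/
theorem Sab_conservative (F : Type*) [Field F] [CharZero F] (α β : F) (a b x y : Fin 8 → F) :
    mul F α β b (mul F α β a (mul F α β x y) - mul F α β (mul F α β a x) y - mul F α β x (mul F α β a y)) - mul F α β a (mul F α β (mul F α β b x) y) + mul F α β (mul F α β a (mul F α β b x)) y + mul F α β (mul F α β b x) (mul F α β a y) - mul F α β a (mul F α β x (mul F α β b y)) + mul F α β (mul F α β a x) (mul F α β b y) + mul F α β x (mul F α β a (mul F α β b y))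
      = - mul F α β (fmul F α β a b) (mul F α β x y) + mul F α β (mul F α β (fmul F α β a b) x) y + mul F α β x (mul F α β (fmul F α β a b) y) := by
  simp only [mul_eq, fmul_eq]
  funext k
  fin_cases k <;>
    simp only [cv0, cv1, cv2, cv3, cv4, cv5, cv6, cv7, cw0, cw1, cw2, cw3, cw4, cw5, cw6, cw7,
      Pi.sub_apply, Pi.add_apply, Pi.neg_apply] <;> ring
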